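/- Let H₀ and V be Hermitian matrices on a finite-dimensional complex Hilbert space, let H = H₀ + V, let a ≤ b be reals and ε > 0. Let G_i = P_H([a+ε, b−ε]) be the spectral projection of H onto the interval [a+ε, b−ε], and let F̄ = P_{H₀}(ℝ ∖ [a, b]) be the spectral projection of H₀ onto the complement of [a, b]. Then ‖G_i F̄‖∞ ≤ ‖V‖∞ / ε. -/

import Mathlib

open scoped ComplexOrder

noncomputable section

/-- The positive semidefinite square root of a positive semidefinite matrix
(removed from Mathlib; restored with its former definition). -/
def Matrix.PosSemidef.sqrt {n : Type*} {𝕜 : Type*} [Fintype n] [RCLike 𝕜] [DecidableEq n]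
    {A : Matrix n n 𝕜} (hA : A.PosSemidef) : Matrix n n 𝕜 :=
  hA.1.eigenvectorUnitary.1 * Matrix.diagonal ((↑) ∘ (Real.sqrt ∘ hA.1.eigenvalues)) *
    (star hA.1.eigenvectorUnitary : Matrix n n 𝕜)

/-- The trace norm of a complex square matrix: the sum of its singular values,
equal to the trace of `√(Xᴴ X)`. -/
def traceNorm {n : Type*} [Fintype n] [DecidableEq n] (X : Matrix n n ℂ) : ℝ :=
  ((Matrix.posSemidef_conjTranspose_mul_self X).sqrt.trace).re

/-- The operator norm (largest singular value) of a complex square matrix. -/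
def opNorm {n : Type*} [Fintype n] [DecidableEq n] (X : Matrix n n ℂ) : ℝ :=
  ‖Matrix.toEuclideanCLM (𝕜 := ℂ) X‖

/-- The spectral projection of a Hermitian matrix `A` onto the set `S ⊆ ℝ`:
the orthogonal projection onto the span of the eigenvectors of `A` with
eigenvalues in `S`. -/
def spectralProj {n : Type*} [Fintype n] [DecidableEq n] {A : Matrix n n ℂ}
    (hA : A.IsHermitian) (S : Set ℝ) : Matrix n n ℂ :=
  (hA.eigenvectorUnitary : Matrix n n ℂ) *
    Matrix.diagonal (fun i => S.indicator (fun _ => (1 : ℂ)) (hA.eigenvalues i)) *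
    (star (hA.eigenvectorUnitary : Matrix n n ℂ))

/-- The number of eigenvalues (counted with multiplicity) of a Hermitian matrix
lying in the set `S ⊆ ℝ`. -/
def eigCount {n : Type*} [Fintype n] [DecidableEq n] {A : Matrix n n ℂ}
    (hA : A.IsHermitian) (S : Set ℝ) : ℕ :=
  Nat.card {i // hA.eigenvalues i ∈ S}

namespace SpecAux
open scoped Matrix.Norms.L2Operator
variable {n : Type*} [Fintype n] [DecidableEq n]

lemma opNorm_eq_norm (X : Matrix n n ℂ) : opNorm X = ‖X‖ := rfl

lemma norm_diagonal_le (d : n → ℂ) (c : ℝ) (hc : 0 ≤ c) (h : ∀ i, ‖d i‖ ≤ c) :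
    ‖Matrix.diagonal d‖ ≤ c := by
  rw [Matrix.l2_opNorm_def]
  refine ContinuousLinearMap.opNorm_le_bound _ hc fun x => ?_
  have hx : (LinearEquiv.trans Matrix.toEuclideanLin LinearMap.toContinuousLinearMap
      (Matrix.diagonal d)) x = Matrix.toEuclideanLin (Matrix.diagonal d) x := rfl
  rw [hx, Matrix.toEuclideanLin_apply]
  rw [EuclideanSpace.norm_eq, EuclideanSpace.norm_eq]
  simp only [PiLp.toLp_apply, Matrix.mulVec_diagonal]
  calc Real.sqrt (∑ i, ‖d i * x i‖ ^ 2)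
      ≤ Real.sqrt (c ^ 2 * ∑ i, ‖x i‖ ^ 2) := by
        refine Real.sqrt_le_sqrt ?_
        rw [Finset.mul_sum]
        refine Finset.sum_le_sum fun i _ => ?_
        rw [norm_mul, mul_pow]
        exact mul_le_mul_of_nonneg_right (pow_le_pow_left₀ (norm_nonneg _) (h i) 2) (sq_nonneg _)
    _ = c * Real.sqrt (∑ i, ‖x i‖ ^ 2) := by
        rw [Real.sqrt_mul (sq_nonneg c), Real.sqrt_sq hc]

lemma conj_mul_conj {U : Matrix n n ℂ} (hU : star U * U = 1) (D E : Matrix n n ℂ) :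
    (U * D * star U) * (U * E * star U) = U * (D * E) * star U := by
  simp only [Matrix.mul_assoc]
  rw [← Matrix.mul_assoc (star U) U, hU, Matrix.one_mul]

lemma norm_conj {U : Matrix n n ℂ} (hU : U ∈ Matrix.unitaryGroup n ℂ)
    (D : Matrix n n ℂ) : ‖U * D * star U‖ = ‖D‖ := by
  rw [CStarRing.norm_mul_mem_unitary _ (Unitary.star_mem hU),
    CStarRing.norm_mem_unitary_mul _ hU]

lemma smul_conj (z : ℂ) (U D : Matrix n n ℂ) :
    z • (U * D * star U) = U * (z • D) * star U := by
  rw [Matrix.mul_smul, Matrix.smul_mul]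

lemma conj_add (U D E : Matrix n n ℂ) :
    U * D * star U + U * E * star U = U * (D + E) * star U := by
  rw [← Matrix.add_mul, ← Matrix.mul_add]

lemma conj_diag_congr {U : Matrix n n ℂ} {v w : n → ℂ} (h : ∀ i, v i = w i) :
    U * Matrix.diagonal v * star U = U * Matrix.diagonal w * star U := by
  rw [show v = w from funext h]

end SpecAux

set_option maxHeartbeats 1000000 in
open SpecAux in
open scoped Matrix.Norms.L2Operator in
/-- the key spectral perturbation estimate
(Bhatia, Theorem VII.3.1): spectral projections of `H = H₀ + V` onto the
shrunken interval and of `H₀` onto the complement of the interval are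
almost orthogonal. -/
theorem spectralProj_inner_outer_opNorm_le {n : Type*} [Fintype n] [DecidableEq n]
    (H₀ V : Matrix n n ℂ) (hH₀ : H₀.IsHermitian) (hV : V.IsHermitian)
    (a b : ℝ) (hab : a ≤ b) (ε : ℝ) (hε : 0 < ε)
    (Gi F' : Matrix n n ℂ)
    (hGi : Gi = spectralProj (hH₀.add hV) (Set.Icc (a + ε) (b - ε)))
    (hF' : F' = spectralProj hH₀ (Set.Icc a b)ᶜ) :
    opNorm (Gi * F') ≤ opNorm V / ε := by
  classical
  simp only [opNorm_eq_norm]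
  by_cases hcase : b - ε < a + ε
  · have hempty : Set.Icc (a+ε) (b-ε) = ∅ := Set.Icc_eq_empty (not_le.mpr hcase)
    have hGi0 : Gi = 0 := by
      rw [hGi, spectralProj, hempty]
      simp
    rw [hGi0, Matrix.zero_mul, norm_zero]
    exact div_nonneg (norm_nonneg _) hε.le
  push_neg at hcase
  have hH : (H₀ + V).IsHermitian := hH₀.add hV
  set c : ℝ := (a+b)/2 with hc_def
  set r : ℝ := (b-a)/2 with hr_def
  have hrε : ε ≤ r := by rw [hr_def]; linarith
  have hr0 : 0 < r := lt_of_lt_of_le hε hrε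
  -- eigendata of H = H₀ + V
  set U : Matrix n n ℂ := (hH.eigenvectorUnitary : Matrix n n ℂ) with hU_def
  have hUmem : U ∈ Matrix.unitaryGroup n ℂ := hH.eigenvectorUnitary.2
  have hUU : star U * U = 1 := Matrix.mem_unitaryGroup_iff'.mp hUmem
  set d : n → ℝ := hH.eigenvalues with hd_def
  set p : n → ℂ := fun i => (Set.Icc (a+ε) (b-ε)).indicator (fun _ => (1:ℂ)) (d i) with hp_def
  -- eigendata of H₀
  set W : Matrix n n ℂ := (hH₀.eigenvectorUnitary : Matrix n n ℂ) with hW_def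
  have hWmem : W ∈ Matrix.unitaryGroup n ℂ := hH₀.eigenvectorUnitary.2
  have hWW : star W * W = 1 := Matrix.mem_unitaryGroup_iff'.mp hWmem
  set e : n → ℝ := hH₀.eigenvalues with he_def
  set q : n → ℂ := fun j => ((Set.Icc a b)ᶜ).indicator (fun _ => (1:ℂ)) (e j) with hq_def
  set g : n → ℂ := fun j => if e j ∈ Set.Icc a b then 0 else (((e j : ℂ)) - (c:ℂ))⁻¹ with hg_def
  set K : Matrix n n ℂ := W * Matrix.diagonal g * star W with hK_def
  set M : Matrix n n ℂ := U * Matrix.diagonal (fun i => ((d i : ℂ) - (c:ℂ)) * p i) * star U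
    with hM_def
  have hGiU : Gi = U * Matrix.diagonal p * star U := hGi
  have hF'W : F' = W * Matrix.diagonal q * star W := hF'
  have hHspec : H₀ + V = U * Matrix.diagonal (fun i => (d i : ℂ)) * star U := hH.spectral_theorem
  have hH₀spec : H₀ = W * Matrix.diagonal (fun j => (e j : ℂ)) * star W := hH₀.spectral_theorem
  -- indicator values
  have hpmem : ∀ i, d i ∈ Set.Icc (a+ε) (b-ε) → p i = 1 := by
    intro i hi
    simp only [hp_def]
    exact Set.indicator_of_mem hi _
  have hpnot : ∀ i, d i ∉ Set.Icc (a+ε) (b-ε) → p i = 0 := by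
    intro i hi
    simp only [hp_def]
    exact Set.indicator_of_notMem hi _
  have hp01 : ∀ i, p i = 0 ∨ p i = 1 := by
    intro i
    by_cases hi : d i ∈ Set.Icc (a+ε) (b-ε)
    · right; exact hpmem i hi
    · left; exact hpnot i hi
  have hgmem : ∀ j, e j ∈ Set.Icc a b → g j = 0 := by
    intro j hj
    simp only [hg_def]
    rw [if_pos hj]
  have hgnot : ∀ j, e j ∉ Set.Icc a b → g j = ((e j : ℂ) - (c:ℂ))⁻¹ := by
    intro j hj
    simp only [hg_def]
    rw [if_neg hj]
  -- algebraic identities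
  have hq01 : ∀ j, (e j ∈ Set.Icc a b → q j = 0) ∧ (e j ∉ Set.Icc a b → q j = 1) := by
    intro j
    constructor
    · intro hj
      simp [hq_def, Set.indicator_of_notMem (show e j ∉ (Set.Icc a b)ᶜ by simpa using hj)]
    · intro hj
      simp [hq_def, Set.indicator_of_mem (show e j ∈ (Set.Icc a b)ᶜ by simpa using hj)]
  have hMGi : M * Gi = M := by
    rw [hM_def, hGiU, conj_mul_conj hUU, Matrix.diagonal_mul_diagonal]
    refine conj_diag_congr fun i => ?_
    rcases hp01 i with h | h <;> simp [h]
  have hF'K : F' * K = K := by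
    rw [hF'W, hK_def, conj_mul_conj hWW, Matrix.diagonal_mul_diagonal]
    refine conj_diag_congr fun j => ?_
    by_cases hj : e j ∈ Set.Icc a b
    · rw [(hq01 j).1 hj, zero_mul, hgmem j hj]
    · rw [(hq01 j).2 hj, one_mul]
  have hGiH : Gi * (H₀ + V) = M + (c:ℂ) • Gi := by
    rw [hGiU, hHspec, conj_mul_conj hUU, Matrix.diagonal_mul_diagonal, hM_def, smul_conj,
      conj_add, ← Matrix.diagonal_smul, Matrix.diagonal_add]
    refine conj_diag_congr fun i => ?_
    simp only [Pi.mul_apply, Pi.add_apply, Pi.smul_apply, smul_eq_mul]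
    rcases hp01 i with h | h <;> rw [h] <;> ring
  have hH₀K : H₀ * K = F' + (c:ℂ) • K := by
    rw [hK_def, hH₀spec, conj_mul_conj hWW, Matrix.diagonal_mul_diagonal, hF'W, smul_conj,
      conj_add, ← Matrix.diagonal_smul, Matrix.diagonal_add]
    refine conj_diag_congr fun j => ?_
    simp only [Pi.mul_apply, Pi.add_apply, Pi.smul_apply, smul_eq_mul]
    by_cases hj : e j ∈ Set.Icc a b
    · rw [(hq01 j).1 hj, hgmem j hj, mul_zero, mul_zero, add_zero]
    · have hne : ((e j : ℂ)) - (c:ℂ) ≠ 0 := by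
        have : e j ≠ c := by
          intro hec
          apply hj
          rw [hec, hc_def]
          constructor <;> [linarith; linarith]
        intro h0
        apply this
        have := sub_eq_zero.mp h0
        exact_mod_cast this
      rw [hgnot j hj, (hq01 j).2 hj]
      field_simp
      ring
  -- the key identity
  have key : Gi * F' = M * (Gi * F') * K - Gi * V * K := by
    have h1 : Gi * V * K = M * K - Gi * F' := by
      have hVeq : V = (H₀ + V) - H₀ := by abel
      calc Gi * V * K = Gi * (H₀ + V) * K - Gi * (H₀ * K) := by
            conv_lhs => rw [hVeq]
            rw [Matrix.mul_sub, Matrix.sub_mul, Matrix.mul_assoc, Matrix.mul_assoc Gi H₀ K]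
        _ = (M + (c:ℂ) • Gi) * K - Gi * (F' + (c:ℂ) • K) := by rw [hGiH, hH₀K]
        _ = M * K - Gi * F' := by
            rw [Matrix.add_mul, Matrix.mul_add, Matrix.smul_mul, Matrix.mul_smul]
            abel
    have h2 : M * (Gi * F') * K = M * K := by
      calc M * (Gi * F') * K = (M * Gi) * (F' * K) := by
            simp only [Matrix.mul_assoc]
        _ = M * K := by rw [hMGi, hF'K]
    rw [h2, h1, sub_sub_cancel]
  -- norm bounds
  have hnormGi : ‖Gi‖ ≤ 1 := by
    rw [hGiU, norm_conj hUmem]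
    refine norm_diagonal_le _ _ zero_le_one fun i => ?_
    rcases hp01 i with h | h <;> simp [h]
  have hnormM : ‖M‖ ≤ r - ε := by
    rw [hM_def, norm_conj hUmem]
    refine norm_diagonal_le _ _ (by linarith) fun i => ?_
    by_cases hi : d i ∈ Set.Icc (a+ε) (b-ε)
    · rw [hpmem i hi, mul_one, show ((d i : ℂ) - (c:ℂ)) = (((d i - c : ℝ)) : ℂ) by push_cast; ring,
        Complex.norm_real, Real.norm_eq_abs, abs_le]
      obtain ⟨h1, h2⟩ := hi
      refine ⟨?_, ?_⟩ <;> rw [hc_def, hr_def] <;> linarith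
    · rw [hpnot i hi, mul_zero, norm_zero]
      linarith
  have hnormK : ‖K‖ ≤ r⁻¹ := by
    rw [hK_def, norm_conj hWmem]
    refine norm_diagonal_le _ _ (by positivity) fun j => ?_
    by_cases hj : e j ∈ Set.Icc a b
    · rw [hgmem j hj, norm_zero]
      positivity
    · rw [hgnot j hj]
      rw [norm_inv, show ((e j : ℂ) - (c:ℂ)) = (((e j - c : ℝ)) : ℂ) by push_cast; ring,
        Complex.norm_real, Real.norm_eq_abs]
      refine inv_anti₀ hr0 ?_
      rw [Set.mem_Icc, not_and_or, not_le, not_le] at hj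
      rcases hj with hj | hj
      · rw [abs_sub_comm, hc_def, hr_def]
        calc (b-a)/2 ≤ (a+b)/2 - e j := by linarith
          _ ≤ |(a+b)/2 - e j| := le_abs_self _
      · rw [hc_def, hr_def]
        calc (b-a)/2 ≤ e j - (a+b)/2 := by linarith
          _ ≤ |e j - (a+b)/2| := le_abs_self _
  -- combine
  set t := ‖Gi * F'‖ with ht_def
  have ht0 : 0 ≤ t := norm_nonneg _
  have hbound : t ≤ (r - ε) * t * r⁻¹ + 1 * ‖V‖ * r⁻¹ := by
    calc t = ‖M * (Gi * F') * K - Gi * V * K‖ := by rw [ht_def]; rw [← key]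
      _ ≤ ‖M * (Gi * F') * K‖ + ‖Gi * V * K‖ := norm_sub_le _ _
      _ ≤ (r - ε) * t * r⁻¹ + 1 * ‖V‖ * r⁻¹ := by
          gcongr
          · calc ‖M * (Gi * F') * K‖ ≤ ‖M * (Gi * F')‖ * ‖K‖ := norm_mul_le _ _
              _ ≤ (‖M‖ * ‖Gi * F'‖) * ‖K‖ :=
                  mul_le_mul_of_nonneg_right (norm_mul_le _ _) (norm_nonneg _)
              _ ≤ (r - ε) * t * r⁻¹ := by
                  have h1 : ‖M‖ * ‖Gi * F'‖ ≤ (r - ε) * t :=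
                    mul_le_mul_of_nonneg_right hnormM ht0
                  exact mul_le_mul h1 hnormK (norm_nonneg _) (mul_nonneg (by linarith) ht0)
          · calc ‖Gi * V * K‖ ≤ ‖Gi * V‖ * ‖K‖ := norm_mul_le _ _
              _ ≤ (‖Gi‖ * ‖V‖) * ‖K‖ :=
                  mul_le_mul_of_nonneg_right (norm_mul_le _ _) (norm_nonneg _)
              _ ≤ 1 * ‖V‖ * r⁻¹ := by
                  have h1 : ‖Gi‖ * ‖V‖ ≤ 1 * ‖V‖ :=
                    mul_le_mul_of_nonneg_right hnormGi (norm_nonneg _)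
                  exact mul_le_mul h1 hnormK (norm_nonneg _) (by positivity)
  rw [le_div_iff₀ hε]
  have hmul := mul_le_mul_of_nonneg_right hbound hr0.le
  have hsimp : ((r - ε) * t * r⁻¹ + 1 * ‖V‖ * r⁻¹) * r = (r - ε) * t + ‖V‖ := by
    field_simp
  rw [hsimp] at hmul
  nlinarith [hmul]

end
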